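/- Let m be an odd positive integer. For every C ∈ R, the number of triples (X,Y,Z) ∈ 𝒯 × 𝒯 × 𝒯 with X + Y + Z = C equals 1 if C ∈ −𝒯 (i.e., −C ∈ 𝒯), and equals 2^m + 1 otherwise. -/

import Mathlib

open Polynomial
open scoped Classical

noncomputable section S4Aux

/-- reduction mod 2 on `ZMod 4` -/
instance : Nontrivial (ZMod 4) := ⟨0, 2, by decide⟩

abbrev phi4 : ZMod 4 →+* ZMod 2 := ZMod.castHom (show (2:ℕ) ∣ 4 by norm_num) (ZMod 2)

lemma zmod4_exists_half : ∀ c : ZMod 4, 2 * c = 0 → ∃ d, c = 2 * d := by decide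

lemma zmod4_ker : ∀ c : ZMod 4, phi4 c = 0 ↔ 2 * c = 0 := by
  intro c; fin_cases c <;> simp <;> decide

lemma poly_half (p : (ZMod 4)[X]) (h : ∀ n, 2 * p.coeff n = 0) : ∃ q, p = 2 * q := by
  choose d hd using fun n => zmod4_exists_half (p.coeff n) (h n)
  refine ⟨∑ i ∈ p.support, C (d i) * X ^ i, ?_⟩
  rw [Finset.mul_sum]
  conv_lhs => rw [p.as_sum_support_C_mul_X_pow]
  refine Finset.sum_congr rfl fun i _ => ?_
  rw [hd i, C_mul]
  simp [mul_assoc, map_ofNat]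
end S4Aux
noncomputable section S4B
open AdjoinRoot

variable (f : Polynomial (ZMod 4))

abbrev Gbar : (ZMod 2)[X] := f.map phi4

def pr : AdjoinRoot f →+* AdjoinRoot (Gbar f) :=
  AdjoinRoot.lift ((AdjoinRoot.of (Gbar f)).comp phi4) (AdjoinRoot.root (Gbar f))
    (by rw [← eval₂_map]; exact AdjoinRoot.eval₂_root _)

lemma pr_mk (p : (ZMod 4)[X]) : pr f (mk f p) = mk (Gbar f) (p.map phi4) := by
  rw [pr, AdjoinRoot.lift_mk, ← AdjoinRoot.aeval_eq, aeval_def, eval₂_map]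
  rfl

lemma pr_surjective : Function.Surjective (pr f) := by
  intro y
  obtain ⟨q, rfl⟩ := AdjoinRoot.mk_surjective (g := Gbar f) y
  refine ⟨mk f (∑ i ∈ q.support, C (((q.coeff i).val : ZMod 4)) * X ^ i), ?_⟩
  rw [pr_mk]
  congr 1
  rw [Polynomial.map_sum]
  conv_rhs => rw [q.as_sum_support_C_mul_X_pow]
  refine Finset.sum_congr rfl fun i _ => ?_
  rw [Polynomial.map_mul, Polynomial.map_pow, map_X, map_C]
  congr 1
  congr 1
  have : ∀ c : ZMod 2, phi4 ((c.val : ZMod 4)) = c := by decide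
  exact this _

variable {f} (hmonic : f.Monic)

include hmonic

lemma exists_repr (x : AdjoinRoot f) : ∃ p : (ZMod 4)[X], p.degree < f.degree ∧ mk f p = x := by
  obtain ⟨p, rfl⟩ := AdjoinRoot.mk_surjective x
  refine ⟨p %ₘ f, degree_modByMonic_lt _ hmonic, ?_⟩
  rw [AdjoinRoot.mk_eq_mk]  -- mk f a = mk f b ↔ f ∣ a - b ?
  exact (dvd_sub_comm).mp (p.modByMonic_eq_sub_mul_div f ▸ ⟨p /ₘ f, by ring⟩)

lemma two_torsion {x : AdjoinRoot f} (h : 2 * x = 0) : ∃ y, x = 2 * y := by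
  obtain ⟨p, hdeg, rfl⟩ := exists_repr hmonic x
  have h2 : mk f (2 * p) = 0 := by rw [map_mul, map_ofNat]; exact_mod_cast h
  rw [AdjoinRoot.mk_eq_zero] at h2
  have hz : 2 * p = 0 := by
    have h3 := (Polynomial.modByMonic_eq_zero_iff_dvd hmonic).mpr h2
    have hself : 2 * p %ₘ f = 2 * p :=
      (Polynomial.modByMonic_eq_self_iff hmonic).mpr
        (lt_of_le_of_lt (degree_mul_le _ _) (by
          have h2 : (2:(ZMod 4)[X]).degree ≤ 0 := by
            rw [← map_ofNat (Polynomial.C (R := ZMod 4)) 2]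
            exact degree_C_le
          calc degree 2 + p.degree ≤ 0 + p.degree := add_le_add_left h2 _
            _ = p.degree := zero_add _
            _ < f.degree := hdeg))
    rwa [hself] at h3
  obtain ⟨q, hq⟩ := poly_half p (fun n => by
    have := congrArg (fun r => Polynomial.coeff r n) hz
    simpa using this)
  exact ⟨mk f q, by rw [hq, map_mul, map_ofNat]⟩

lemma pr_eq_zero_iff {x : AdjoinRoot f} (hpos : 0 < f.natDegree) :
    pr f x = 0 ↔ ∃ y, x = 2 * y := by
  constructor
  · intro h
    obtain ⟨p, hdeg, rfl⟩ := exists_repr hmonic x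
    rw [pr_mk, AdjoinRoot.mk_eq_zero] at h
    have hz : p.map phi4 = 0 := by
      have hG : (Gbar f).Monic := hmonic.map phi4
      have h3 := (Polynomial.modByMonic_eq_zero_iff_dvd hG).mpr h
      have hself : p.map phi4 %ₘ Gbar f = p.map phi4 :=
        (Polynomial.modByMonic_eq_self_iff hG).mpr
          (calc (p.map phi4).degree ≤ p.degree := degree_map_le
            _ < f.degree := hdeg
            _ = (Gbar f).degree := (hmonic.degree_map phi4).symm)
      rwa [hself] at h3
    obtain ⟨q, hq⟩ := poly_half p (fun n => by
      have := congrArg (fun r => Polynomial.coeff r n) hz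
      simp only [Polynomial.coeff_map, Polynomial.coeff_zero] at this
      exact (zmod4_ker _).mp this)
    exact ⟨mk f q, by rw [hq, map_mul, map_ofNat]⟩
  · rintro ⟨y, rfl⟩
    rw [map_mul, map_ofNat]
    have h2 : (2 : AdjoinRoot (Gbar f)) = 0 := by
      rw [← map_ofNat (AdjoinRoot.of (Gbar f)) 2, show (2 : ZMod 2) = 0 by decide, map_zero]
    rw [h2, zero_mul]

end S4B


section Count
variable {K : Type*} [Field K] [Fintype K]

lemma two_eq_zero_of_card {mm : ℕ} (hpos : 0 < mm) (hc : Fintype.card K = 2 ^ mm) :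
    (2 : K) = 0 := by
  have h := FiniteField.cast_card_eq_zero K
  rw [hc] at h
  push_cast at h
  exact pow_eq_zero_iff (Nat.pos_iff_ne_zero.mp hpos) |>.mp h

lemma no_cubic_root {mm : ℕ} (hm : Odd mm) (hc : Fintype.card K = 2 ^ mm)
    (r : K) (hr : r ^ 2 + r + 1 = 0) : False := by
  have hpos : 0 < mm := hm.pos
  have h2 : (2 : K) = 0 := two_eq_zero_of_card hpos hc
  have h4 : r ^ 4 = r := by linear_combination (r^2 - r) * hr
  have h4j : ∀ j : ℕ, r ^ 4 ^ j = r := by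
    intro j; induction j with
    | zero => simp
    | succ n ih => rw [pow_succ, mul_comm, pow_mul, h4, ih]
  obtain ⟨j, hj⟩ := hm
  have hcard : r ^ 2 ^ mm = r := by rw [← hc]; exact FiniteField.pow_card r
  have he : 2 ^ mm = 4 ^ j * 2 := by
    rw [hj, pow_succ, pow_mul]; norm_num
  have h2m : r ^ 2 ^ mm = r ^ 2 := by rw [he, pow_mul, h4j]
  have : r ^ 2 = r := h2m ▸ hcard
  have : (1 : K) = 0 := by linear_combination hr - this - r * h2
  exact one_ne_zero this

lemma norm_form_zero {mm : ℕ} (hm : Odd mm) (hc : Fintype.card K = 2 ^ mm)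
    (a b : K) (h : a ^ 2 + a * b + b ^ 2 = 0) : a = 0 ∧ b = 0 := by
  by_cases hb : b = 0
  · subst hb
    simp only [mul_zero, add_zero, zero_pow, ne_eq, OfNat.ofNat_ne_zero,
      not_false_eq_true] at h
    exact ⟨sq_eq_zero_iff.mp h, rfl⟩
  · exfalso
    refine no_cubic_root hm hc (a / b) ?_
    have hb2 : b ^ 2 ≠ 0 := pow_ne_zero _ hb
    field_simp
    linear_combination h
end Count

section Count2
variable {K : Type*} [Field K] [Fintype K]

lemma sqrt_exists {mm : ℕ} (hpos : 0 < mm) (hc : Fintype.card K = 2 ^ mm) (w : K) :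
    ∃ t : K, t ^ 2 = w := by
  refine ⟨w ^ 2 ^ (mm - 1), ?_⟩
  rw [← pow_mul, ← pow_succ, Nat.sub_add_cancel hpos, ← hc]
  exact FiniteField.pow_card w

private def Nform : K × K → K := fun p => p.1 ^ 2 + p.1 * p.2 + p.2 ^ 2

lemma fiber_card_scale (l : K) (hl : l ≠ 0) (w : K) :
    (Finset.univ.filter (fun p : K × K => Nform p = w)).card =
    (Finset.univ.filter (fun p : K × K => Nform p = l ^ 2 * w)).card := by
  refine Finset.card_bij' (fun p _ => (l * p.1, l * p.2)) (fun p _ => (l⁻¹ * p.1, l⁻¹ * p.2))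
    ?_ ?_ ?_ ?_
  · intro p hp
    simp only [Finset.mem_filter, Finset.mem_univ, true_and] at hp ⊢
    simp only [Nform] at hp ⊢
    rw [← hp]; ring
  · intro p hp
    simp only [Finset.mem_filter, Finset.mem_univ, true_and] at hp ⊢
    simp only [Nform] at hp ⊢
    have hre : (l⁻¹ * p.1) ^ 2 + l⁻¹ * p.1 * (l⁻¹ * p.2) + (l⁻¹ * p.2) ^ 2
        = l⁻¹ ^ 2 * (p.1 ^ 2 + p.1 * p.2 + p.2 ^ 2) := by ring
    rw [hre, hp, ← mul_assoc, ← mul_pow, inv_mul_cancel₀ hl, one_pow, one_mul]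
  · intro p hp
    field_simp
  · intro p hp
    field_simp

lemma count_norm_form {mm : ℕ} (hm : Odd mm) (hc : Fintype.card K = 2 ^ mm) (w : K) :
    Nat.card {p : K × K // Nform p = w} = if w = 0 then 1 else 2 ^ mm + 1 := by
  have hpos : 0 < mm := hm.pos
  classical
  have hsub : ∀ v : K, Nat.card {p : K × K // Nform p = v} =
      (Finset.univ.filter (fun p : K × K => Nform p = v)).card := by
    intro v
    rw [Nat.card_eq_fintype_card, Fintype.card_subtype]
  have hfib0 : (Finset.univ.filter (fun p : K × K => Nform p = 0)).card = 1 := by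
    have : (Finset.univ.filter (fun p : K × K => Nform p = 0)) = {((0 : K), (0 : K))} := by
      ext p
      simp only [Finset.mem_filter, Finset.mem_univ, true_and, Finset.mem_singleton]
      constructor
      · intro h
        obtain ⟨h1, h2⟩ := norm_form_zero hm hc p.1 p.2 h
        exact Prod.ext h1 h2
      · rintro rfl
        simp [Nform]
    rw [this, Finset.card_singleton]
  have hconst : ∀ v : K, v ≠ 0 →
      (Finset.univ.filter (fun p : K × K => Nform p = v)).card =
      (Finset.univ.filter (fun p : K × K => Nform p = 1)).card := by
    intro v hv
    obtain ⟨t, ht⟩ := sqrt_exists hpos hc v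
    have htne : t ≠ 0 := by rintro rfl; simp at ht; exact hv ht.symm
    have h := fiber_card_scale t htne 1
    rw [mul_one] at h
    rw [← ht]
    exact h.symm
  set c1 := (Finset.univ.filter (fun p : K × K => Nform p = 1)).card with hc1
  have hsum : Fintype.card (K × K) =
      ∑ v : K, (Finset.univ.filter (fun p : K × K => Nform p = v)).card := by
    rw [← Finset.card_univ]
    exact Finset.card_eq_sum_card_fiberwise (fun x _ => Finset.mem_univ (Nform x))
  rw [Finset.sum_eq_add_sum_sdiff_singleton_of_mem (Finset.mem_univ (0:K))] at hsum
  have hrest : ∑ v ∈ Finset.univ \ {(0:K)}, (Finset.univ.filter (fun p : K × K => Nform p = v)).card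
      = (Fintype.card K - 1) * c1 := by
    rw [Finset.sum_congr rfl (fun v hv => hconst v (by
      simp only [Finset.mem_sdiff, Finset.mem_univ, Finset.mem_singleton, true_and] at hv
      exact hv))]
    rw [Finset.sum_const, smul_eq_mul]
    congr 1
    rw [Finset.card_sdiff_of_subset (by simp), Finset.card_univ, Finset.card_singleton]
  rw [hfib0, hrest, Fintype.card_prod, hc] at hsum
  -- hsum : 2^mm * 2^mm = 1 + (2^mm - 1) * c1
  have hq2 : 2 ≤ 2 ^ mm := by
    calc 2 = 2 ^ 1 := (pow_one 2).symm
    _ ≤ 2 ^ mm := Nat.pow_le_pow_right (by norm_num) hpos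
  obtain ⟨k, hk⟩ : ∃ k, 2 ^ mm = k + 1 := ⟨2 ^ mm - 1, by omega⟩
  rw [hk] at hsum
  simp only [Nat.add_sub_cancel] at hsum
  have hc1val : c1 = 2 ^ mm + 1 := by
    have h1 : k * c1 = k * (k + 2) := by nlinarith
    rcases Nat.eq_zero_or_pos k with hk0 | hkpos
    · omega
    · have := Nat.eq_of_mul_eq_mul_left hkpos h1
      omega
  by_cases hw : w = 0
  · subst hw; rw [hsub, hfib0, if_pos rfl]
  · rw [hsub, hconst w hw, if_neg hw]
    exact hc1val

end Count2

noncomputable section S4C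
open AdjoinRoot

variable {f : Polynomial (ZMod 4)}

lemma four_eq_zero (f : Polynomial (ZMod 4)) : (4 : AdjoinRoot f) = 0 := by
  rw [← map_ofNat (AdjoinRoot.of f) 4, show (4 : ZMod 4) = 0 by decide, map_zero]

lemma shift_sq (x h : AdjoinRoot f) : (x + 2 * h) ^ 2 = x ^ 2 := by
  have h4 := four_eq_zero f
  linear_combination (x * h + h * h) * h4

lemma shift_pow {k : ℕ} (hk : 0 < k) (x h : AdjoinRoot f) :
    (x + 2 * h) ^ 2 ^ k = x ^ 2 ^ k := by
  have : 2 ^ k = 2 * 2 ^ (k - 1) := by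
    rw [← pow_succ']
    congr 1
    omega
  rw [this, pow_mul, pow_mul, shift_sq]

lemma sum_pow_formula {k : ℕ} (hk : 0 < k) (x y : AdjoinRoot f) :
    (x + y) ^ 2 ^ k = x ^ 2 ^ k + y ^ 2 ^ k + 2 * (x * y) ^ 2 ^ (k - 1) := by
  obtain ⟨n, rfl⟩ : ∃ n, k = n + 1 := ⟨k - 1, by omega⟩
  rw [Nat.add_sub_cancel]
  clear hk
  induction n with
  | zero => norm_num; ring
  | succ n ih =>
    rw [pow_succ 2 (n+1), pow_mul (x+y), pow_mul x, pow_mul y, ih, shift_sq, mul_pow]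
    ring

end S4C

noncomputable section S4D
open AdjoinRoot

variable {f : Polynomial (ZMod 4)}

lemma two_eq_zero_fq : (2 : AdjoinRoot (Gbar f)) = 0 := by
  rw [← map_ofNat (AdjoinRoot.of (Gbar f)) 2, show (2 : ZMod 2) = 0 by decide, map_zero]

lemma fq_card (hmonic : f.Monic) [Fintype (AdjoinRoot (Gbar f))] :
    Fintype.card (AdjoinRoot (Gbar f)) = 2 ^ f.natDegree := by
  classical
  rw [Module.card_fintype (AdjoinRoot.powerBasis' (hmonic.map phi4)).basis, ZMod.card]
  congr 1
  simp [AdjoinRoot.powerBasis', hmonic.natDegree_map]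

variable (hmonic : f.Monic) (hpos : 0 < f.natDegree) [Fact (Irreducible (Gbar f))]
  [Fintype (AdjoinRoot (Gbar f))]

include hmonic in
lemma fq_pow_card (a : AdjoinRoot (Gbar f)) : a ^ 2 ^ f.natDegree = a := by
  rw [← fq_card hmonic]
  exact FiniteField.pow_card a

include hmonic hpos

lemma pow_q_idem (x : AdjoinRoot f) :
    (x ^ 2 ^ f.natDegree) ^ 2 ^ f.natDegree = x ^ 2 ^ f.natDegree := by
  have h0 : pr f (x ^ 2 ^ f.natDegree - x) = 0 := by
    rw [map_sub, map_pow, fq_pow_card hmonic, sub_self]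
  obtain ⟨y, hy⟩ := (pr_eq_zero_iff hmonic hpos).mp h0
  have hx : x ^ 2 ^ f.natDegree = x + 2 * y := by linear_combination hy
  rw [hx, shift_pow hpos]
  exact hx

/-- Teichmüller lift -/
def tau (f : Polynomial (ZMod 4)) (a : AdjoinRoot (Gbar f)) : AdjoinRoot f :=
  (Function.surjInv (pr_surjective f) a) ^ 2 ^ f.natDegree

lemma tau_teich (a : AdjoinRoot (Gbar f)) :
    tau f a ^ 2 ^ f.natDegree = tau f a := pow_q_idem hmonic hpos _

omit hpos in
lemma pr_tau (a : AdjoinRoot (Gbar f)) : pr f (tau f a) = a := by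
  rw [tau, map_pow, Function.surjInv_eq (pr_surjective f) a, fq_pow_card hmonic]

lemma teich_inj {x y : AdjoinRoot f} (hx : x ^ 2 ^ f.natDegree = x)
    (hy : y ^ 2 ^ f.natDegree = y) (h : pr f x = pr f y) : x = y := by
  have h0 : pr f (x - y) = 0 := by rw [map_sub, h, sub_self]
  obtain ⟨z, hz⟩ := (pr_eq_zero_iff hmonic hpos).mp h0
  have hx' : x = y + 2 * z := by linear_combination hz
  rw [← hx, hx', shift_pow hpos, hy]

lemma tau_pr {x : AdjoinRoot f} (hx : x ^ 2 ^ f.natDegree = x) : tau f (pr f x) = x :=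
  teich_inj hmonic hpos (tau_teich hmonic hpos _) hx (pr_tau hmonic _)

lemma two_tau_pr (x : AdjoinRoot f) : 2 * tau f (pr f x) = 2 * x := by
  have h0 : pr f (tau f (pr f x) - x) = 0 := by rw [map_sub, pr_tau hmonic, sub_self]
  obtain ⟨y, hy⟩ := (pr_eq_zero_iff hmonic hpos).mp h0
  linear_combination 2 * hy + y * (four_eq_zero f)

lemma tau_add (a b : AdjoinRoot (Gbar f)) :
    tau f a + tau f b = tau f (a + b) + 2 * tau f ((a * b) ^ 2 ^ (f.natDegree - 1)) := by
  set x := tau f a with hxdef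
  set y := tau f b with hydef
  set d := (x * y) ^ 2 ^ (f.natDegree - 1) with hddef
  have hf := sum_pow_formula hpos x y
  rw [tau_teich hmonic hpos, tau_teich hmonic hpos] at hf
  -- hf : (x + y) ^ 2 ^ nd = x + y + 2 * d
  have key1 : (x + y) ^ 2 ^ f.natDegree = tau f (a + b) := by
    refine (teich_inj hmonic hpos (tau_teich hmonic hpos _) (pow_q_idem hmonic hpos _) ?_).symm
    rw [pr_tau hmonic, map_pow, map_add, pr_tau hmonic, pr_tau hmonic, fq_pow_card hmonic]
  have key2 : 2 * tau f ((a * b) ^ 2 ^ (f.natDegree - 1)) = 2 * d := by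
    have hprd : pr f d = (a * b) ^ 2 ^ (f.natDegree - 1) := by
      rw [hddef, map_pow, map_mul, pr_tau hmonic, pr_tau hmonic]
    rw [← hprd, two_tau_pr hmonic hpos]
  linear_combination (-1 : AdjoinRoot f) * hf + key1 - key2 - d * (four_eq_zero f)

lemma two_tau_add (u v : AdjoinRoot (Gbar f)) :
    2 * tau f u + 2 * tau f v = 2 * tau f (u + v) := by
  have h := tau_add hmonic hpos u v
  linear_combination 2 * h + (tau f ((u * v) ^ 2 ^ (f.natDegree - 1))) * (four_eq_zero f)

lemma decomp_inj {a b a' b' : AdjoinRoot (Gbar f)}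
    (h : tau f a + 2 * tau f b = tau f a' + 2 * tau f b') : a = a' ∧ b = b' := by
  have hpr : ∀ x : AdjoinRoot f, pr f (2 * x) = 0 := by
    intro x
    rw [map_mul, map_ofNat, two_eq_zero_fq, zero_mul]
  have ha : a = a' := by
    have := congrArg (pr f) h
    rwa [map_add, map_add, pr_tau hmonic, pr_tau hmonic, hpr, hpr, add_zero, add_zero] at this
  refine ⟨ha, ?_⟩
  subst ha
  have h2 : 2 * (tau f b - tau f b') = 0 := by linear_combination h
  obtain ⟨y, hy⟩ := two_torsion hmonic h2
  have h0 : pr f (tau f b - tau f b') = 0 := by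
    rw [hy]; exact hpr y
  rwa [map_sub, pr_tau hmonic, pr_tau hmonic, sub_eq_zero] at h0

end S4D

open AdjoinRoot in
theorem statement4 (m : ℕ) (hm : Odd m) (hmpos : 0 < m)
    (f : Polynomial (ZMod 4)) (hmonic : f.Monic) (hdeg : f.natDegree = m)
    (hirr : Irreducible (f.map (ZMod.castHom (show (2:ℕ) ∣ 4 by norm_num) (ZMod 2))))
    (C : AdjoinRoot f) :
    Nat.card {t : AdjoinRoot f × AdjoinRoot f × AdjoinRoot f //
        t.1 ^ 2 ^ m = t.1 ∧ t.2.1 ^ 2 ^ m = t.2.1 ∧ t.2.2 ^ 2 ^ m = t.2.2 ∧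
        t.1 + t.2.1 + t.2.2 = C} =
      if (-C) ^ 2 ^ m = -C then 1 else 2 ^ m + 1 := by
  subst hdeg
  haveI hF : Fact (Irreducible (Gbar f)) := ⟨hirr⟩
  haveI hFin : Fintype (AdjoinRoot (Gbar f)) :=
    Module.fintypeOfFintype (AdjoinRoot.powerBasis' (hmonic.map phi4)).basis
  have hpos : 0 < f.natDegree := hmpos
  set K := AdjoinRoot (Gbar f) with hK
  have hcard : Fintype.card K = 2 ^ f.natDegree := fq_card hmonic
  have h2K : (2 : K) = 0 := two_eq_zero_fq
  -- square root facts
  have hσ : ∀ c u : K, c ^ 2 ^ (f.natDegree - 1) = u ↔ c = u ^ 2 := by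
    intro c u
    have hcc : (c ^ 2 ^ (f.natDegree - 1)) ^ 2 = c := by
      rw [← pow_mul, ← pow_succ, Nat.sub_add_cancel hpos]
      exact fq_pow_card hmonic c
    have huu : (u ^ 2) ^ 2 ^ (f.natDegree - 1) = u := by
      rw [← pow_mul, ← pow_succ', Nat.sub_add_cancel hpos]
      exact fq_pow_card hmonic u
    constructor
    · rintro rfl; exact hcc.symm
    · rintro rfl; exact huu
  haveI : CharP K 2 := charP_of_injective_algebraMap (algebraMap (ZMod 2) K).injective 2
  have hadd : ∀ u v : K, (u + v) ^ 2 ^ (f.natDegree - 1)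
      = u ^ 2 ^ (f.natDegree - 1) + v ^ 2 ^ (f.natDegree - 1) := fun u v =>
    add_pow_char_pow u v 2 (f.natDegree - 1)
  -- decomposition of C
  have hC0 : pr f (C - C ^ 2 ^ f.natDegree) = 0 := by
    rw [map_sub, map_pow, fq_pow_card hmonic, sub_self]
  obtain ⟨h, hh⟩ := (pr_eq_zero_iff hmonic hpos).mp hC0
  set s := pr f C with hs
  set t := pr f h with ht
  have h1 : tau f s = C ^ 2 ^ f.natDegree := by
    have h2 := tau_pr hmonic hpos (pow_q_idem hmonic hpos C)
    rwa [map_pow, fq_pow_card hmonic] at h2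
  have h2t : 2 * tau f t = 2 * h := two_tau_pr hmonic hpos h
  have hdecomp : C = tau f s + 2 * tau f t := by linear_combination hh - h1 - h2t
  -- condition equivalence
  have htau0 : 2 * tau f (0 : K) = 0 := by
    obtain ⟨y, hy⟩ := (pr_eq_zero_iff hmonic hpos).mp (pr_tau hmonic (0 : K))
    linear_combination 2 * hy + y * (four_eq_zero f)
  have hcond : ((-C) ^ 2 ^ f.natDegree = -C) ↔ s + t = 0 := by
    have heven : Even (2 ^ f.natDegree) := by
      refine ⟨2 ^ (f.natDegree - 1), ?_⟩
      rw [← two_mul, ← pow_succ', Nat.sub_add_cancel hpos]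
    rw [heven.neg_pow]
    constructor
    · intro hEq
      have h2z : 2 * tau f (s + t) = 0 := by
        rw [← two_tau_add hmonic hpos]
        linear_combination hEq + h1 - hdecomp
      obtain ⟨y, hy⟩ := two_torsion hmonic h2z
      have : pr f (tau f (s + t)) = 0 := by
        rw [hy, map_mul, map_ofNat, two_eq_zero_fq, zero_mul]
      rwa [pr_tau hmonic] at this
    · intro hst
      have h2z : 2 * tau f s + 2 * tau f t = 0 := by
        rw [two_tau_add hmonic hpos, hst]; exact htau0
      linear_combination hdecomp - h1 + h2z
  -- the master equation
  have hmain : ∀ a b c : K, (tau f a + tau f b + tau f c = C) ↔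
      (a + b + c = s ∧ a * b + a * c + b * c = t ^ 2) := by
    intro a b c
    have e1 : tau f a + tau f b + tau f c
        = tau f (a + b + c) + 2 * tau f ((a * b + a * c + b * c) ^ 2 ^ (f.natDegree - 1)) := by
      rw [tau_add hmonic hpos a b, add_right_comm, tau_add hmonic hpos (a + b) c, add_assoc,
        two_tau_add hmonic hpos]
      congr 2
      rw [← hadd]
      congr 1
      ring
    rw [e1, hdecomp]
    constructor
    · intro hEq
      obtain ⟨hA, hB⟩ := decomp_inj hmonic hpos hEq
      exact ⟨hA, (hσ _ _).mp hB⟩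
    · rintro ⟨hA, hB⟩
      rw [hA, (hσ _ t).mpr hB]
  -- counting chain
  have key : Nat.card {p : AdjoinRoot f × AdjoinRoot f × AdjoinRoot f //
      p.1 ^ 2 ^ f.natDegree = p.1 ∧ p.2.1 ^ 2 ^ f.natDegree = p.2.1 ∧
      p.2.2 ^ 2 ^ f.natDegree = p.2.2 ∧ p.1 + p.2.1 + p.2.2 = C}
      = Nat.card {p : K × K // Nform p = t ^ 2 + s ^ 2} := by
    have e1 : {p : AdjoinRoot f × AdjoinRoot f × AdjoinRoot f //
        p.1 ^ 2 ^ f.natDegree = p.1 ∧ p.2.1 ^ 2 ^ f.natDegree = p.2.1 ∧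
        p.2.2 ^ 2 ^ f.natDegree = p.2.2 ∧ p.1 + p.2.1 + p.2.2 = C} ≃
        {p : K × K × K // p.1 + p.2.1 + p.2.2 = s ∧
          p.1 * p.2.1 + p.1 * p.2.2 + p.2.1 * p.2.2 = t ^ 2} :=
      { toFun := fun x => ⟨(pr f x.1.1, pr f x.1.2.1, pr f x.1.2.2), by
          obtain ⟨⟨X, Y, Z⟩, hX, hY, hZ, hsum⟩ := x
          refine (hmain _ _ _).mp ?_
          simpa only [tau_pr hmonic hpos hX, tau_pr hmonic hpos hY,
            tau_pr hmonic hpos hZ] using hsum⟩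
        invFun := fun x => ⟨(tau f x.1.1, tau f x.1.2.1, tau f x.1.2.2),
          tau_teich hmonic hpos _, tau_teich hmonic hpos _, tau_teich hmonic hpos _,
          (hmain _ _ _).mpr x.2⟩
        left_inv := by
          rintro ⟨⟨X, Y, Z⟩, hX, hY, hZ, hsum⟩
          simp only [Subtype.mk.injEq, Prod.mk.injEq]
          exact ⟨tau_pr hmonic hpos hX, tau_pr hmonic hpos hY, tau_pr hmonic hpos hZ⟩
        right_inv := by
          rintro ⟨⟨a, b, c⟩, hc⟩
          simp only [Subtype.mk.injEq, Prod.mk.injEq]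
          exact ⟨pr_tau hmonic _, pr_tau hmonic _, pr_tau hmonic _⟩ }
    have e2 : {p : K × K × K // p.1 + p.2.1 + p.2.2 = s ∧
          p.1 * p.2.1 + p.1 * p.2.2 + p.2.1 * p.2.2 = t ^ 2} ≃
        {p : K × K // p.1 * p.2 + p.1 * (s - p.1 - p.2) + p.2 * (s - p.1 - p.2) = t ^ 2} :=
      { toFun := fun x => ⟨(x.1.1, x.1.2.1), by
          obtain ⟨⟨a, b, c⟩, hsum, he2⟩ := x
          have hc : c = s - a - b := by linear_combination hsum
          simp only
          rw [← he2, hc]⟩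
        invFun := fun x => ⟨(x.1.1, x.1.2, s - x.1.1 - x.1.2), by
          obtain ⟨⟨a, b⟩, hq⟩ := x
          exact ⟨by ring, by linear_combination hq⟩⟩
        left_inv := by
          rintro ⟨⟨a, b, c⟩, hsum, he2⟩
          have hc : s - a - b = c := by linear_combination -hsum
          exact Subtype.ext (by show (a, b, s - a - b) = (a, b, c); rw [hc])
        right_inv := by
          rintro ⟨⟨a, b⟩, hq⟩
          rfl }
    have e3 : {p : K × K // p.1 * p.2 + p.1 * (s - p.1 - p.2) + p.2 * (s - p.1 - p.2) = t ^ 2} ≃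
        {p : K × K // Nform p = t ^ 2 + s ^ 2} :=
      { toFun := fun x => ⟨(x.1.1 + s, x.1.2 + s), by
          obtain ⟨⟨a, b⟩, hq⟩ := x
          simp only [Nform]
          linear_combination hq + (a^2 + a*b + b^2 + a*s + b*s + s^2) * h2K⟩
        invFun := fun x => ⟨(x.1.1 + s, x.1.2 + s), by
          obtain ⟨⟨a, b⟩, hq⟩ := x
          simp only [Nform] at hq
          linear_combination (-1 : K) * hq + (-(a*s) - b*s - s^2 - t^2) * h2K⟩
        left_inv := by
          rintro ⟨⟨a, b⟩, hq⟩
          simp only [Subtype.mk.injEq, Prod.mk.injEq]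
          constructor <;> linear_combination s * h2K
        right_inv := by
          rintro ⟨⟨a, b⟩, hq⟩
          simp only [Subtype.mk.injEq, Prod.mk.injEq]
          constructor <;> linear_combination s * h2K }
    exact Nat.card_congr ((e1.trans e2).trans e3)
  rw [key, count_norm_form hm hcard]
  have hw : t ^ 2 + s ^ 2 = (s + t) ^ 2 := by linear_combination (-(s*t)) * h2K
  by_cases hst : s + t = 0
  · rw [if_pos (hcond.mpr hst), if_pos (by rw [hw, hst]; ring)]
  · rw [if_neg (fun hEq => hst (hcond.mp hEq)), if_neg (by
      rw [hw]
      exact fun hEq => hst (sq_eq_zero_iff.mp hEq))]
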